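/- Let F be a finite family of convex sets in ℝ^d partitioned into d+1 nonempty color classes F_1, …, F_{d+1}. Suppose that every colorful tuple (D_1, …, D_{d+1}) with D_i ∈ F_i for all i satisfies D_1 ∩ ⋯ ∩ D_{d+1} ≠ ∅. Then there exists an index i such that the intersection of all sets in F_i is nonempty. -/

import Mathlib

open Finset Metric
open scoped InnerProductSpace

section ConeLemmas

variable {V : Type*} [NormedAddCommGroup V] [InnerProductSpace ℝ V]
variable {ι : Type*} [Fintype ι]


/-- The convex cone generated by a finite family of vectors, as a set. -/
def coneF (f : ι → V) : Set V :=
  {x | ∃ c : ι → ℝ, (∀ i, 0 ≤ c i) ∧ ∑ i, c i • f i = x}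

lemma zero_mem_coneF (f : ι → V) : (0 : V) ∈ coneF f :=
  ⟨0, fun _ => le_refl _, by simp⟩

lemma add_mem_coneF {f : ι → V} {x y : V} (hx : x ∈ coneF f) (hy : y ∈ coneF f) :
    x + y ∈ coneF f := by
  obtain ⟨c, hc, hcs⟩ := hx
  obtain ⟨c', hc', hcs'⟩ := hy
  exact ⟨c + c', fun i => add_nonneg (hc i) (hc' i), by
    simp [add_smul, Finset.sum_add_distrib, hcs, hcs']⟩

lemma smul_mem_coneF {f : ι → V} {x : V} {t : ℝ} (ht : 0 ≤ t) (hx : x ∈ coneF f) :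
    t • x ∈ coneF f := by
  obtain ⟨c, hc, hcs⟩ := hx
  exact ⟨t • c, fun i => mul_nonneg ht (hc i), by
    simp [← hcs, Finset.smul_sum, smul_smul]⟩

lemma convex_coneF (f : ι → V) : Convex ℝ (coneF f) := by
  intro x hx y hy a b ha hb _
  exact add_mem_coneF (smul_mem_coneF ha hx) (smul_mem_coneF hb hy)

lemma mem_coneF_self (f : ι → V) (i : ι) : f i ∈ coneF f := by
  classical
  refine ⟨fun j => if j = i then 1 else 0, fun j => by positivity, ?_⟩
  simp [ite_smul]

/-- Conic Carathéodory: every element of the cone has a representation whose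
support is linearly independent. -/
lemma caratheodory_coneF {f : ι → V} (c : ι → ℝ) (hc : ∀ i, 0 ≤ c i) :
    ∃ c' : ι → ℝ, (∀ i, 0 ≤ c' i) ∧ ∑ i, c' i • f i = ∑ i, c i • f i ∧
      LinearIndependent ℝ (fun i : {i // c' i ≠ 0} => f i) := by
  classical
  suffices H : ∀ n (c : ι → ℝ), (∀ i, 0 ≤ c i) →
      (Finset.univ.filter (fun i => c i ≠ 0)).card ≤ n →
      ∃ c' : ι → ℝ, (∀ i, 0 ≤ c' i) ∧ ∑ i, c' i • f i = ∑ i, c i • f i ∧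
        LinearIndependent ℝ (fun i : {i // c' i ≠ 0} => f i) by
    exact H _ c hc le_rfl
  intro n
  induction n with
  | zero =>
    intro c hc hcard
    refine ⟨c, hc, rfl, ?_⟩
    have : ∀ i, c i = 0 := by
      intro i
      by_contra hi
      have : i ∈ Finset.univ.filter (fun i => c i ≠ 0) := by simp [hi]
      have := Finset.card_pos.mpr ⟨i, this⟩
      omega
    have : IsEmpty {i // c i ≠ 0} := ⟨fun i => i.2 (this i)⟩
    exact linearIndependent_empty_type
  | succ n ih =>
    intro c hc hcard
    by_cases hli : LinearIndependent ℝ (fun i : {i // c i ≠ 0} => f i)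
    · exact ⟨c, hc, rfl, hli⟩
    rw [Fintype.not_linearIndependent_iff] at hli
    obtain ⟨g0, hg0, j0, hj0⟩ := hli
    -- make sure some coefficient is positive
    obtain ⟨g, hg, j1, hj1⟩ : ∃ g : {i // c i ≠ 0} → ℝ,
        (∑ i, g i • f i.val) = 0 ∧ ∃ j, 0 < g j := by
      rcases lt_or_ge 0 (g0 j0) with hpos | hneg
      · exact ⟨g0, hg0, j0, hpos⟩
      · refine ⟨-g0, by simpa using hg0, j0, ?_⟩
        have : g0 j0 < 0 := lt_of_le_of_ne hneg hj0
        simpa using this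
    -- the minimum ratio
    have hTne : (Finset.univ.filter (fun i : {i // c i ≠ 0} => 0 < g i)).Nonempty :=
      ⟨j1, by simp [hj1]⟩
    obtain ⟨j, hjT, hjmin⟩ := Finset.exists_min_image _ (fun i => c i.val / g i) hTne
    have hjg : 0 < g j := by simpa using (Finset.mem_filter.mp hjT).2
    have hjc : 0 < c j.val := lt_of_le_of_ne (hc _) (Ne.symm j.2)
    set t : ℝ := c j.val / g j with ht
    have ht0 : 0 < t := div_pos hjc hjg
    set G : ι → ℝ := fun i => if h : c i ≠ 0 then g ⟨i, h⟩ else 0 with hG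
    set c' : ι → ℝ := fun i => c i - t * G i with hc'
    have hGsum : ∑ i, G i • f i = 0 := by
      rw [← hg]
      rw [← Finset.sum_filter_of_ne (p := fun i => c i ≠ 0)
        (f := fun i => G i • f i) (by
          intro i _ hne
          by_contra hci
          exact hne (by simp [hG, hci]))]
      rw [Finset.sum_subtype (p := fun i => c i ≠ 0) (Finset.univ.filter (fun i => c i ≠ 0))
        (by intro x; simp) (fun i => G i • f i)]
      refine Finset.sum_congr rfl fun i _ => ?_
      simp only [hG, dif_pos i.2]
    -- nonnegativity of c'
    have hc'0 : ∀ i, 0 ≤ c' i := by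
      intro i
      by_cases hci : c i ≠ 0
      · simp only [hc', hG, dif_pos hci]
        rcases le_or_gt (g ⟨i, hci⟩) 0 with hgle | hgpos
        · have : t * g ⟨i, hci⟩ ≤ 0 := mul_nonpos_of_nonneg_of_nonpos ht0.le hgle
          have := hc i; nlinarith
        · have hmem : (⟨i, hci⟩ : {i // c i ≠ 0}) ∈
              Finset.univ.filter (fun i : {i // c i ≠ 0} => 0 < g i) := by simp [hgpos]
          have := hjmin _ hmem
          rw [ht, div_le_div_iff₀ hjg hgpos] at this
          have : t * g ⟨i, hci⟩ ≤ c i := by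
            rw [ht, div_mul_eq_mul_div, div_le_iff₀ hjg]; linarith
          linarith
      · have hci' : c i = 0 := not_not.mp hci
        simp [hc', hG, hci']
    -- sum preserved
    have hsum : ∑ i, c' i • f i = ∑ i, c i • f i := by
      simp only [hc', sub_smul, Finset.sum_sub_distrib, mul_smul]
      rw [← Finset.smul_sum, hGsum, smul_zero, sub_zero]
    -- support strictly decreases
    have hsubset : Finset.univ.filter (fun i => c' i ≠ 0) ⊆
        Finset.univ.filter (fun i => c i ≠ 0) := by
      intro i hi
      simp only [Finset.mem_filter, Finset.mem_univ, true_and] at hi ⊢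
      by_contra hci
      exact hi (by simp [hc', hG, hci])
    have hjzero : c' j.val = 0 := by
      simp only [hc', hG, dif_pos j.2, ht]
      field_simp
      ring
    have hcard' : (Finset.univ.filter (fun i => c' i ≠ 0)).card ≤ n := by
      have hss : Finset.univ.filter (fun i => c' i ≠ 0) ⊂
          Finset.univ.filter (fun i => c i ≠ 0) := by
        refine ⟨hsubset, fun hsup => ?_⟩
        have := hsup (by simp [j.2] : j.val ∈ Finset.univ.filter (fun i => c i ≠ 0))
        simp only [Finset.mem_filter] at this
        exact this.2 hjzero
      have := Finset.card_lt_card hss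
      omega
    obtain ⟨c'', h1, h2, h3⟩ := ih c' hc'0 hcard'
    exact ⟨c'', h1, h2.trans hsum, h3⟩

lemma isClosed_coneF [FiniteDimensional ℝ V] (f : ι → V) : IsClosed (coneF f) := by
  classical
  have key : coneF f = ⋃ T ∈ {T : Finset ι |
      LinearIndependent ℝ (fun i : {i // i ∈ T} => f i)},
      (fun c : {i // i ∈ T} → ℝ => ∑ i, c i • f i.val) '' {c | ∀ i, 0 ≤ c i} := by
    ext x
    simp only [Set.mem_iUnion, Set.mem_image, Set.mem_setOf_eq]
    constructor
    · rintro ⟨c, hc, rfl⟩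
      obtain ⟨c', hc'0, hsum, hli⟩ := caratheodory_coneF (f := f) c hc
      refine ⟨Finset.univ.filter (fun i => c' i ≠ 0), ?_, fun i => c' i.val,
        fun i => hc'0 _, ?_⟩
      · exact (linearIndependent_equiv (Equiv.subtypeEquivRight (fun i => by simp))).mpr hli
      · rw [← hsum]
        rw [Finset.sum_coe_sort (Finset.univ.filter (fun i => c' i ≠ 0))
          (fun i => c' i • f i)]
        refine Finset.sum_subset (Finset.filter_subset _ _) fun i _ hi => ?_
        simp only [Finset.mem_filter, Finset.mem_univ, true_and, not_not] at hi
        simp [hi]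
    · rintro ⟨T, hT, c, hc, rfl⟩
      refine ⟨fun i => if h : i ∈ T then c ⟨i, h⟩ else 0, fun i => ?_, ?_⟩
      · by_cases h : i ∈ T <;> simp [h, hc _]
      · calc ∑ i : ι, (if h : i ∈ T then c ⟨i, h⟩ else 0) • f i
            = ∑ i ∈ T, (if h : i ∈ T then c ⟨i, h⟩ else 0) • f i :=
              (Finset.sum_subset T.subset_univ (fun i _ hi => by simp [hi])).symm
          _ = ∑ i : {i // i ∈ T}, (if h : i.val ∈ T then c ⟨i.val, h⟩ else 0) • f i.val :=
              (Finset.sum_coe_sort T _).symm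
          _ = ∑ i : {i // i ∈ T}, c i • f i.val := by
              refine Finset.sum_congr rfl fun i _ => ?_
              simp [i.2]
  rw [key]
  refine Set.Finite.isClosed_biUnion (Set.toFinite _) fun T hT => ?_
  -- the map is an injective linear map, hence a closed embedding
  let L : ({i // i ∈ T} → ℝ) →ₗ[ℝ] V :=
    { toFun := fun c => ∑ i, c i • f i.val
      map_add' := fun a b => by simp [add_smul, Finset.sum_add_distrib]
      map_smul' := fun t a => by simp [Finset.smul_sum, smul_smul] }
  have hT' : LinearIndependent ℝ (fun i : {i // i ∈ T} => f i) := hT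
  rw [Fintype.linearIndependent_iff] at hT'
  have hker : LinearMap.ker L = ⊥ := by
    rw [LinearMap.ker_eq_bot']
    intro c hc
    funext i
    exact hT' c hc i
  have hemb := LinearMap.isClosedEmbedding_of_injective (𝕜 := ℝ) (E := {i // i ∈ T} → ℝ)
    (F := V) (f := L) hker
  have hcl : IsClosed {c : {i // i ∈ T} → ℝ | ∀ i, 0 ≤ c i} := by
    have : {c : {i // i ∈ T} → ℝ | ∀ i, 0 ≤ c i} = ⋂ i, {c | 0 ≤ c i} :=
      by ext c; simp
    rw [this]
    exact isClosed_iInter fun i => isClosed_le continuous_const (continuous_apply i)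
  exact hemb.isClosedMap _ hcl

/-- Conic colorful Carathéodory: if `z` lies in the cone of each color class and
the number of colors is at least the dimension, then `z` lies in the cone of
some colorful selection. -/
theorem colorful_cone [FiniteDimensional ℝ V] [Nonempty ι]
    (hdim : Module.finrank ℝ V ≤ Fintype.card ι)
    (κ : ι → Type*) [∀ i, Fintype (κ i)] [∀ i, Nonempty (κ i)]
    (q : ∀ i, κ i → V) (z : V) (hz : ∀ i, z ∈ coneF (q i)) :
    ∃ s : ∀ i, κ i, z ∈ coneF (fun i => q i (s i)) := by
  classical
  -- choose the selection minimizing the distance from z to its cone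
  obtain ⟨s₀, -, hs₀min⟩ := Finset.exists_min_image (Finset.univ : Finset (∀ i, κ i))
    (fun s => infDist z (coneF (fun i => q i (s i)))) ⟨Classical.arbitrary _, Finset.mem_univ _⟩
  by_cases hmem : z ∈ coneF (fun i => q i (s₀ i))
  · exact ⟨s₀, hmem⟩
  exfalso
  set S : Set V := coneF (fun i => q i (s₀ i)) with hS
  have hSc : IsClosed S := isClosed_coneF _
  have hSne : S.Nonempty := ⟨0, zero_mem_coneF _⟩
  have hSconv : Convex ℝ S := convex_coneF _
  -- nearest point w
  obtain ⟨w, hwS, hwdist⟩ := exists_norm_eq_iInf_of_complete_convex hSne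
    (hSc.isComplete) hSconv z
  have hproj : ∀ y ∈ S, ⟪z - w, y - w⟫_ℝ ≤ 0 :=
    (norm_eq_iInf_iff_real_inner_le_zero hSconv hwS).mp hwdist
  have hdistw : ‖z - w‖ = infDist z S := by
    rw [hwdist, infDist_eq_iInf]
    congr 1
    funext y
    rw [dist_eq_norm]
  have hupos : 0 < ‖z - w‖ := by
    rw [hdistw]
    exact (hSc.notMem_iff_infDist_pos hSne).mp hmem
  have huw : ⟪z - w, w⟫_ℝ = 0 := by
    have h1 := hproj 0 (zero_mem_coneF _)
    have h2 := hproj ((2:ℝ) • w) (smul_mem_coneF (by norm_num) hwS)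
    rw [zero_sub, inner_neg_right] at h1
    have h3 : (2:ℝ) • w - w = w := by module
    rw [h3] at h2
    linarith
  have hle : ∀ y ∈ S, ⟪z - w, y⟫_ℝ ≤ 0 := by
    intro y hy
    have := hproj (y + w) (add_mem_coneF hy hwS)
    rwa [add_sub_cancel_right] at this
  have huz : ⟪z - w, z⟫_ℝ = ‖z - w‖ ^ 2 := by
    calc ⟪z - w, z⟫_ℝ = ⟪z - w, (z - w) + w⟫_ℝ := by rw [sub_add_cancel]
      _ = ‖z - w‖ ^ 2 := by
          rw [inner_add_right, huw, real_inner_self_eq_norm_sq, add_zero]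
  -- a good representation of w
  obtain ⟨c, hc0, hcs⟩ := hwS
  obtain ⟨c', hc'0, hc's, hli⟩ := caratheodory_coneF (f := fun i => q i (s₀ i)) c hc0
  have hc'w : ∑ i, c' i • q i (s₀ i) = w := hc's.trans hcs
  by_cases hzero : ∃ i₀, c' i₀ = 0
  · -- case A: some color is unused, swap it to decrease the distance
    obtain ⟨i₀, hi₀⟩ := hzero
    -- find a vector of color i₀ with positive inner product with z - w
    obtain ⟨μ, hμ0, hμs⟩ := hz i₀
    have hex : ∃ j, 0 < ⟪z - w, q i₀ j⟫_ℝ := by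
      by_contra hno
      push_neg at hno
      have : ⟪z - w, z⟫_ℝ ≤ 0 := by
        nth_rewrite 2 [← hμs]
        rw [inner_sum]
        refine Finset.sum_nonpos fun j _ => ?_
        rw [real_inner_smul_right]
        exact mul_nonpos_of_nonneg_of_nonpos (hμ0 j) (hno j)
      rw [huz] at this
      nlinarith
    obtain ⟨j', hj'⟩ := hex
    set q' : V := q i₀ j' with hq'
    have hq'ne : q' ≠ 0 := by
      intro h0
      rw [h0, inner_zero_right] at hj'
      exact lt_irrefl 0 hj'
    set a : ℝ := ⟪z - w, q'⟫_ℝ with hadef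
    set b : ℝ := ‖q'‖ ^ 2 with hbdef
    have hbpos : 0 < b := pow_pos (norm_pos_iff.mpr hq'ne) 2
    set s₁ : ∀ i, κ i := Function.update s₀ i₀ j' with hs₁
    -- w is in the new cone
    have hwS₁ : w ∈ coneF (fun i => q i (s₁ i)) := by
      refine ⟨c', hc'0, ?_⟩
      rw [← hc'w]
      refine Finset.sum_congr rfl fun i _ => ?_
      rcases eq_or_ne i i₀ with rfl | hne
      · rw [hi₀]; simp
      · simp only [hs₁, Function.update_of_ne hne]
    have hq'S₁ : q' ∈ coneF (fun i => q i (s₁ i)) := by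
      have : q i₀ (s₁ i₀) = q' := by simp only [hs₁, Function.update_self, hq']
      rw [← this]
      exact mem_coneF_self _ i₀
    set t : ℝ := a / b with htdef
    have htpos : 0 < t := div_pos hj' hbpos
    have hyt : w + t • q' ∈ coneF (fun i => q i (s₁ i)) :=
      add_mem_coneF hwS₁ (smul_mem_coneF htpos.le hq'S₁)
    have hless : ‖z - (w + t • q')‖ ^ 2 < ‖z - w‖ ^ 2 := by
      have h1 : z - (w + t • q') = (z - w) - t • q' := by abel
      rw [h1, norm_sub_sq_real, real_inner_smul_right, norm_smul, Real.norm_eq_abs,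
        abs_of_pos htpos, mul_pow, ← hadef, ← hbdef, htdef]
      have : ‖z - w‖^2 - 2*(a/b*a) + (a/b)^2*b = ‖z - w‖^2 - a^2/b := by
        field_simp
        ring
      rw [this]
      have : 0 < a^2/b := div_pos (pow_pos hj' 2) hbpos
      linarith
    have hlt : infDist z (coneF (fun i => q i (s₁ i))) < infDist z S := by
      calc infDist z (coneF (fun i => q i (s₁ i))) ≤ dist z (w + t • q') :=
            infDist_le_dist_of_mem hyt
        _ = ‖z - (w + t • q')‖ := dist_eq_norm _ _
        _ < ‖z - w‖ := by
            have := hless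
            nlinarith [norm_nonneg (z - (w + t • q')), norm_nonneg (z - w)]
        _ = infDist z S := hdistw
    exact absurd (hs₀min s₁ (Finset.mem_univ _)) (not_le.mpr hlt)
  · -- case B: all colors used; the selected vectors are independent and span
    push_neg at hzero
    have horth : ∀ i, ⟪z - w, q i (s₀ i)⟫_ℝ = 0 := by
      have hsum : ∑ i, c' i * ⟪z - w, q i (s₀ i)⟫_ℝ = 0 := by
        rw [← huw, ← hc'w, inner_sum]
        refine Finset.sum_congr rfl fun i _ => ?_
        rw [real_inner_smul_right]
      have hterm : ∀ i ∈ Finset.univ, c' i * ⟪z - w, q i (s₀ i)⟫_ℝ ≤ 0 :=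
        fun i _ => mul_nonpos_of_nonneg_of_nonpos (hc'0 i)
          (hle _ (mem_coneF_self _ i))
      have hall := (Finset.sum_eq_zero_iff_of_nonpos hterm).mp hsum
      intro i
      have := hall i (Finset.mem_univ i)
      have hcpos : 0 < c' i := lt_of_le_of_ne (hc'0 i) (Ne.symm (hzero i))
      have := mul_eq_zero.mp this
      rcases this with h | h
      · exact absurd h hcpos.ne'
      · exact h
    have hli' : LinearIndependent ℝ (fun i : ι => q i (s₀ i)) := by
      let e : {i // c' i ≠ 0} ≃ ι := Equiv.subtypeUnivEquiv hzero
      have hcomp : ((fun i : ι => q i (s₀ i)) ∘ ⇑e)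
          = fun i : {i // c' i ≠ 0} => q i (s₀ i) := by
        funext i; rfl
      exact (linearIndependent_equiv e).mp (hcomp ▸ hli)
    have hcard : Fintype.card ι = Module.finrank ℝ V :=
      le_antisymm (hli'.fintype_card_le_finrank) hdim
    have hspan : Submodule.span ℝ (Set.range (fun i : ι => q i (s₀ i))) = ⊤ :=
      hli'.span_eq_top_of_card_eq_finrank hcard
    have hforall : ∀ x ∈ Submodule.span ℝ (Set.range (fun i : ι => q i (s₀ i))),
        ⟪z - w, x⟫_ℝ = 0 := by
      intro x hx
      induction hx using Submodule.span_induction with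
      | mem x h =>
        obtain ⟨i, rfl⟩ := h
        exact horth i
      | zero => exact inner_zero_right _
      | add x y _ _ ihx ihy => rw [inner_add_right, ihx, ihy, add_zero]
      | smul r x _ ih => rw [real_inner_smul_right, ih, mul_zero]
    have hzw : ⟪z - w, z - w⟫_ℝ = 0 :=
      hforall _ (by rw [hspan]; exact Submodule.mem_top)
    rw [real_inner_self_eq_norm_sq] at hzw
    nlinarith

end ConeLemmas

section Certificate

variable {E : Type*} [NormedAddCommGroup E] [InnerProductSpace ℝ E] [FiniteDimensional ℝ E]

/-- From a finite family of nonempty compact convex sets with empty intersection,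
extract a "certificate": projection points and normals summing to zero. -/
lemma exists_certificate {κ : Type*} [Fintype κ] [Nonempty κ]
    (K : κ → Set E) (hK : ∀ j, IsCompact (K j)) (hKc : ∀ j, Convex ℝ (K j))
    (hKne : ∀ j, (K j).Nonempty) (hempty : (⋂ j, K j) = ∅) :
    ∃ (v : κ → E) (p : κ → E), (∀ j, p j ∈ K j) ∧
      (∀ j, ∀ y ∈ K j, ⟪v j, y⟫_ℝ ≤ ⟪v j, p j⟫_ℝ) ∧
      (∑ j, v j = 0) ∧ (∑ j, ⟪v j, p j⟫_ℝ < 0) := by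
  classical
  -- a bound on the sets
  obtain ⟨R₀, hR₀⟩ := ((isCompact_iUnion hK).isBounded).subset_closedBall 0
  set R : ℝ := max R₀ 1 with hR
  have hRpos : (0:ℝ) < R := lt_of_lt_of_le one_pos (le_max_right _ _)
  have hKR : ∀ j, K j ⊆ closedBall 0 R := fun j =>
    (Set.subset_iUnion K j).trans (hR₀.trans (closedBall_subset_closedBall (le_max_left _ _)))
  have hKRnorm : ∀ j, ∀ y ∈ K j, ‖y‖ ≤ R := by
    intro j y hy
    have := hKR j hy
    rwa [mem_closedBall, dist_zero_right] at this
  -- the function to minimize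
  set g : E → ℝ := fun x => ∑ j, (infDist x (K j)) ^ 2 with hg
  have hgc : Continuous g :=
    continuous_finset_sum _ fun j _ => ((continuous_infDist_pt (K j)).pow 2)
  obtain ⟨x₀, hx₀mem, hx₀min⟩ := (isCompact_closedBall (0:E) (3*R)).exists_isMinOn
    (nonempty_closedBall.mpr (by positivity)) hgc.continuousOn
  have hmin : ∀ x ∈ closedBall (0:E) (3*R), g x₀ ≤ g x := fun x hx => hx₀min hx
  -- nearest points
  have hp : ∀ j, ∃ p ∈ K j, infDist x₀ (K j) = dist x₀ p := fun j =>
    (hK j).exists_infDist_eq_dist (hKne j) x₀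
  choose p hpmem hpdist using hp
  -- the projection inequality
  have hproj : ∀ j, ∀ y ∈ K j, ⟪x₀ - p j, y - p j⟫_ℝ ≤ 0 := by
    intro j y hy
    by_contra hcon
    push_neg at hcon
    have hbpos : (0:ℝ) < ‖y - p j‖ ^ 2 := by
      rcases eq_or_ne (y - p j) 0 with h0 | h0
      · rw [h0, inner_zero_right] at hcon; exact absurd hcon (lt_irrefl 0)
      · exact pow_pos (norm_pos_iff.mpr h0) 2
    set a : ℝ := ⟪x₀ - p j, y - p j⟫_ℝ with ha
    set t : ℝ := min 1 (a / ‖y - p j‖ ^ 2) with htd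
    have htpos : 0 < t := lt_min one_pos (div_pos hcon hbpos)
    have htle : t ≤ 1 := min_le_left _ _
    have hz : p j + t • (y - p j) ∈ K j := by
      have := (hKc j) (hpmem j) hy (by linarith : (0:ℝ) ≤ 1 - t) htpos.le (by ring)
      convert this using 1
      module
    have hd : dist x₀ (p j) ≤ dist x₀ (p j + t • (y - p j)) := by
      rw [← hpdist j]; exact infDist_le_dist_of_mem hz
    have hsq : ‖x₀ - p j‖ ^ 2 ≤ ‖x₀ - p j - t • (y - p j)‖ ^ 2 := by
      rw [dist_eq_norm] at hd
      have h2 : x₀ - (p j + t • (y - p j)) = x₀ - p j - t • (y - p j) := by abel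
      rw [dist_eq_norm, h2] at hd
      exact pow_le_pow_left₀ (norm_nonneg _) hd 2
    have hexp : ‖x₀ - p j - t • (y - p j)‖ ^ 2
        = ‖x₀ - p j‖ ^ 2 - 2 * (t * a) + t ^ 2 * ‖y - p j‖ ^ 2 := by
      rw [norm_sub_sq_real, real_inner_smul_right, norm_smul, Real.norm_eq_abs,
        abs_of_pos htpos, mul_pow, ← ha]
    have hsq2 : 2 * a ≤ t * ‖y - p j‖ ^ 2 := by nlinarith [hsq, hexp, htpos]
    have h4 : t * ‖y - p j‖ ^ 2 ≤ a := by
      have h5 : t ≤ a / ‖y - p j‖ ^ 2 := min_le_right _ _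
      rw [le_div_iff₀ hbpos] at h5
      exact h5
    linarith
  -- x₀ is in the interior of the ball
  have hx₀lt : ‖x₀‖ < 3 * R := by
    rcases lt_or_ge ‖x₀‖ (3*R) with h | h
    · exact h
    exfalso
    have hub : g 0 ≤ (Fintype.card κ : ℝ) * R ^ 2 := by
      rw [hg]
      calc ∑ j, (infDist (0:E) (K j)) ^ 2 ≤ ∑ _j : κ, R ^ 2 := by
            refine Finset.sum_le_sum fun j _ => ?_
            refine pow_le_pow_left₀ infDist_nonneg ?_ 2
            obtain ⟨y, hy⟩ := hKne j
            calc infDist 0 (K j) ≤ dist 0 y := infDist_le_dist_of_mem hy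
              _ ≤ R := by rw [dist_comm, dist_zero_right]; exact hKRnorm j y hy
        _ = (Fintype.card κ : ℝ) * R ^ 2 := by rw [Finset.sum_const, card_univ]; ring
    have hlb : (Fintype.card κ : ℝ) * (2*R) ^ 2 ≤ g x₀ := by
      rw [hg]
      calc (Fintype.card κ : ℝ) * (2*R)^2 = ∑ _j : κ, (2*R)^2 := by
            rw [Finset.sum_const, card_univ]; ring
        _ ≤ ∑ j, (infDist x₀ (K j)) ^ 2 := by
            refine Finset.sum_le_sum fun j _ => ?_
            refine pow_le_pow_left₀ (by positivity) ?_ 2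
            refine le_of_not_gt fun hlt => ?_
            obtain ⟨y, hy, hdy⟩ := (infDist_lt_iff (hKne j)).mp hlt
            have h1 : ‖y‖ ≤ R := hKRnorm j y hy
            have h2 : ‖x₀‖ - ‖y‖ ≤ dist x₀ y := by
              rw [dist_eq_norm]
              exact (norm_sub_norm_le _ _).trans (le_refl _)
            linarith
    have hcard : (1:ℝ) ≤ (Fintype.card κ : ℝ) := by
      exact_mod_cast Fintype.card_pos
    have := hmin 0 (by simp [mem_closedBall]; positivity)
    nlinarith
  -- the gradient condition: ∑ (x₀ - p j) = 0
  have hgrad : ∑ j, (x₀ - p j) = 0 := by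
    by_contra hs
    set s : E := ∑ j, (x₀ - p j) with hsd
    have hsnorm : (0:ℝ) < ‖s‖ := norm_pos_iff.mpr hs
    set m : ℝ := (Fintype.card κ : ℝ) with hm
    have hmpos : (0:ℝ) < m := by rw [hm]; exact_mod_cast Fintype.card_pos
    set t : ℝ := min (1/m) ((3*R - ‖x₀‖)/‖s‖) with htd
    have htpos : 0 < t := lt_min (by positivity) (div_pos (by linarith) hsnorm)
    have hmem : x₀ - t • s ∈ closedBall (0:E) (3*R) := by
      rw [mem_closedBall, dist_zero_right]
      calc ‖x₀ - t • s‖ ≤ ‖x₀‖ + ‖t • s‖ := norm_sub_le _ _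
        _ = ‖x₀‖ + t * ‖s‖ := by rw [norm_smul, Real.norm_eq_abs, abs_of_pos htpos]
        _ ≤ ‖x₀‖ + ((3*R - ‖x₀‖)/‖s‖) * ‖s‖ := by
            have := min_le_right (1/m) ((3*R - ‖x₀‖)/‖s‖)
            nlinarith
        _ = 3*R := by field_simp; ring
    have hgbound : g (x₀ - t • s) ≤ g x₀ - 2*t*‖s‖^2 + m * t^2 * ‖s‖^2 := by
      have hterm : ∀ j, (infDist (x₀ - t • s) (K j))^2
          ≤ ‖x₀ - p j‖^2 - 2*t*⟪s, x₀ - p j⟫_ℝ + t^2*‖s‖^2 := by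
        intro j
        have h1 : infDist (x₀ - t • s) (K j) ≤ ‖x₀ - t • s - p j‖ := by
          have := infDist_le_dist_of_mem (x := x₀ - t • s) (hpmem j)
          rwa [dist_eq_norm] at this
        have h2 : ‖x₀ - t • s - p j‖^2 = ‖x₀ - p j‖^2 - 2*t*⟪s, x₀ - p j⟫_ℝ + t^2*‖s‖^2 := by
          have h3 : x₀ - t • s - p j = (x₀ - p j) - t • s := by abel
          rw [h3, norm_sub_sq_real, real_inner_smul_right, norm_smul, Real.norm_eq_abs,
            abs_of_pos htpos, mul_pow, real_inner_comm (x₀ - p j) s]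
          ring
        calc (infDist (x₀ - t • s) (K j))^2 ≤ ‖x₀ - t • s - p j‖^2 :=
              pow_le_pow_left₀ infDist_nonneg h1 2
          _ = _ := h2
      calc g (x₀ - t • s) ≤ ∑ j, (‖x₀ - p j‖^2 - 2*t*⟪s, x₀ - p j⟫_ℝ + t^2*‖s‖^2) :=
            Finset.sum_le_sum fun j _ => hterm j
        _ = ∑ j, ‖x₀ - p j‖^2 - 2*t*⟪s, s⟫_ℝ + m * t^2 * ‖s‖^2 := by
            rw [Finset.sum_add_distrib, Finset.sum_sub_distrib, ← Finset.mul_sum,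
              ← inner_sum, ← hsd, Finset.sum_const, card_univ]
            simp only [nsmul_eq_mul]
            ring
        _ = g x₀ - 2*t*‖s‖^2 + m * t^2 * ‖s‖^2 := by
            rw [real_inner_self_eq_norm_sq]
            congr 1
            · congr 1
              rw [hg]
              refine Finset.sum_congr rfl fun j _ => ?_
              rw [hpdist j, dist_eq_norm]
    have hge := hmin _ hmem
    have htm : t ≤ 1/m := min_le_left _ _
    have hmt : m * t ≤ 1 := by
      have := (le_div_iff₀ hmpos).mp htm
      linarith
    have hkey : 2*t*‖s‖^2 ≤ m*t^2*‖s‖^2 := by linarith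
    have hsq : (0:ℝ) < ‖s‖^2 := pow_pos hsnorm 2
    have h2t : 2*t ≤ m*t^2 := by nlinarith [hkey, hsq]
    have h2mt : 2 ≤ m*t := by nlinarith [htpos, h2t]
    linarith
  -- not all v j are zero
  have hpos : 0 < ∑ j, ‖x₀ - p j‖ ^ 2 := by
    have hnn : ∀ j ∈ Finset.univ, (0:ℝ) ≤ ‖x₀ - p j‖^2 := fun j _ => by positivity
    rcases lt_or_eq_of_le (Finset.sum_nonneg hnn) with h | h
    · exact h
    exfalso
    have hall := (Finset.sum_eq_zero_iff_of_nonneg hnn).mp h.symm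
    have : x₀ ∈ ⋂ j, K j := by
      refine Set.mem_iInter.mpr fun j => ?_
      have h1 := hall j (Finset.mem_univ j)
      have h2 : ‖x₀ - p j‖ = 0 := by nlinarith [norm_nonneg (x₀ - p j)]
      have h3 : x₀ = p j := by
        have := norm_eq_zero.mp h2
        rwa [sub_eq_zero] at this
      rw [h3]; exact hpmem j
    rw [hempty] at this
    exact this
  have hsumt : ∑ j, ⟪x₀ - p j, p j⟫_ℝ < 0 := by
    have hre : ∀ j, ⟪x₀ - p j, p j⟫_ℝ = ⟪x₀ - p j, x₀⟫_ℝ - ‖x₀ - p j‖^2 := by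
      intro j
      have hpj : p j = x₀ - (x₀ - p j) := by abel
      nth_rewrite 2 [hpj]
      rw [inner_sub_right, real_inner_self_eq_norm_sq]
    calc ∑ j, ⟪x₀ - p j, p j⟫_ℝ
        = ∑ j, (⟪x₀ - p j, x₀⟫_ℝ - ‖x₀ - p j‖^2) :=
          Finset.sum_congr rfl (fun j _ => hre j)
      _ = ⟪∑ j, (x₀ - p j), x₀⟫_ℝ - ∑ j, ‖x₀ - p j‖^2 := by
          rw [Finset.sum_sub_distrib, sum_inner]
      _ = -∑ j, ‖x₀ - p j‖^2 := by rw [hgrad, inner_zero_left]; ring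
      _ < 0 := by linarith [hpos]
  exact ⟨fun j => x₀ - p j, p, hpmem,
    fun j y hy => by
      have := hproj j y hy
      rw [inner_sub_right] at this
      linarith,
    hgrad, hsumt⟩

end Certificate

/-- **Colorful Helly theorem** (Lovász): if a finite family of convex sets is partitioned
into `d+1` nonempty color classes and every colorful tuple has a common point, then some
color class has a common point. -/
theorem colorful_helly (d : ℕ)
    (F : Fin (d + 1) → Finset (Set (EuclideanSpace ℝ (Fin d))))
    (hne : ∀ i, (F i).Nonempty)
    (hconv : ∀ i, ∀ C ∈ F i, Convex ℝ C)
    (h : ∀ D : Fin (d + 1) → Set (EuclideanSpace ℝ (Fin d)),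
      (∀ i, D i ∈ F i) → (⋂ i, D i).Nonempty) :
    ∃ i, (⋂ C ∈ F i, C).Nonempty := by
  classical
  by_contra hcon
  push_neg at hcon
  haveI hnei : ∀ i, Nonempty {C // C ∈ F i} := fun i =>
    ⟨⟨(hne i).choose, (hne i).choose_spec⟩⟩
  -- witnesses for colorful tuples
  have hwit : ∀ s : ∀ i, {C // C ∈ F i}, ∃ x : EuclideanSpace ℝ (Fin d),
      ∀ i, x ∈ (s i : Set (EuclideanSpace ℝ (Fin d))) := by
    intro s
    obtain ⟨x, hx⟩ := h (fun i => (s i : Set (EuclideanSpace ℝ (Fin d)))) (fun i => (s i).2)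
    exact ⟨x, fun i => Set.mem_iInter.mp hx i⟩
  choose wit hwitmem using hwit
  -- the polytopes
  set K : ∀ i, {C // C ∈ F i} → Set (EuclideanSpace ℝ (Fin d)) :=
    fun i C => convexHull ℝ (wit '' {s | s i = C}) with hK
  have hKsubC : ∀ i (C : {C // C ∈ F i}), K i C ⊆ (C : Set (EuclideanSpace ℝ (Fin d))) := by
    intro i C
    refine convexHull_min ?_ (hconv i C C.2)
    rintro x ⟨s, hs, rfl⟩
    have := hwitmem s i
    rwa [hs] at this
  have hKcompact : ∀ i (C : {C // C ∈ F i}), IsCompact (K i C) := fun i C =>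
    ((Set.toFinite _).image wit).isCompact_convexHull (𝕜 := ℝ)
  have hKconvex : ∀ i (C : {C // C ∈ F i}), Convex ℝ (K i C) := fun i C =>
    convex_convexHull _ _
  have hKne : ∀ i (C : {C // C ∈ F i}), (K i C).Nonempty := by
    intro i C
    set s : ∀ i', {C // C ∈ F i'} :=
      Function.update (fun i' => Classical.arbitrary _) i C with hs
    refine ⟨wit s, subset_convexHull _ _ ⟨s, ?_, rfl⟩⟩
    simp [hs]
  have hKsel : ∀ s : ∀ i, {C // C ∈ F i}, ∀ i, wit s ∈ K i (s i) := fun s i =>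
    subset_convexHull _ _ ⟨s, rfl, rfl⟩
  -- each color class of polytopes has empty intersection
  have hempty : ∀ i, (⋂ C : {C // C ∈ F i}, K i C) = ∅ := by
    intro i
    rw [Set.eq_empty_iff_forall_notMem]
    intro x hx
    have hmem : x ∈ ⋂ C ∈ F i, C := Set.mem_iInter₂.mpr fun C hC =>
      hKsubC i ⟨C, hC⟩ (Set.mem_iInter.mp hx ⟨C, hC⟩)
    rw [hcon i] at hmem
    exact hmem
  -- certificates
  have hcert := fun i => exists_certificate (K i) (hKcompact i) (hKconvex i)
    (hKne i) (hempty i)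
  choose v p hpmem hhalf hsumv hsumt using hcert
  -- lift to dimension d+1
  set L : WithLp 2 (EuclideanSpace ℝ (Fin d) × ℝ) ≃ₗ[ℝ] EuclideanSpace ℝ (Fin d) × ℝ :=
    WithLp.linearEquiv 2 ℝ (EuclideanSpace ℝ (Fin d) × ℝ) with hL
  haveI : FiniteDimensional ℝ (WithLp 2 (EuclideanSpace ℝ (Fin d) × ℝ)) :=
    L.symm.finiteDimensional
  set q : ∀ i, {C // C ∈ F i} → WithLp 2 (EuclideanSpace ℝ (Fin d) × ℝ) :=
    fun i j => L.symm (v i j, ⟪v i j, p i j⟫_ℝ) with hq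
  set z : WithLp 2 (EuclideanSpace ℝ (Fin d) × ℝ) := L.symm (0, -1) with hz
  have hdim : Module.finrank ℝ (WithLp 2 (EuclideanSpace ℝ (Fin d) × ℝ))
      ≤ Fintype.card (Fin (d + 1)) := by
    rw [L.finrank_eq, Module.finrank_prod, finrank_euclideanSpace_fin,
      Module.finrank_self, Fintype.card_fin]
  -- z is in the cone of each color class
  have hzc : ∀ i, z ∈ coneF (q i) := by
    intro i
    set T : ℝ := ∑ j, ⟪v i j, p i j⟫_ℝ with hT
    have hTneg : T < 0 := hsumt i
    refine ⟨fun _ => -T⁻¹, fun j => ?_, ?_⟩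
    · have : T⁻¹ < 0 := inv_neg''.mpr hTneg
      linarith
    · rw [hq, hz]
      have heq : ∑ j, (-T⁻¹) • L.symm (v i j, ⟪v i j, p i j⟫_ℝ)
          = L.symm (∑ j, (-T⁻¹) • (v i j, ⟪v i j, p i j⟫_ℝ)) := by
        rw [map_sum]
        refine Finset.sum_congr rfl fun j _ => ?_
        rw [map_smul]
      rw [heq]
      congr 1
      have hpair : ∑ j, (-T⁻¹) • (v i j, ⟪v i j, p i j⟫_ℝ)
          = (∑ j, (-T⁻¹) • v i j, ∑ j, (-T⁻¹) * ⟪v i j, p i j⟫_ℝ) := by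
        rw [prod_mk_sum]
        refine Finset.sum_congr rfl fun j _ => ?_
        rw [Prod.smul_mk, smul_eq_mul]
      rw [hpair]
      have h1 : ∑ j, (-T⁻¹) • v i j = 0 := by
        rw [← Finset.smul_sum, hsumv i, smul_zero]
      have h2 : ∑ j, (-T⁻¹) * ⟪v i j, p i j⟫_ℝ = -1 := by
        rw [← Finset.mul_sum, ← hT]
        field_simp
        rw [div_self hTneg.ne]
      rw [h1, h2]
  -- apply colorful Carathéodory
  obtain ⟨s, c, hc0, hcs⟩ := colorful_cone hdim (fun i => {C // C ∈ F i}) q z hzc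
  -- derive the contradiction at the witness point of the selection s
  have hcomp : (∑ i, c i • (v i (s i), ⟪v i (s i), p i (s i)⟫_ℝ))
      = ((0 : EuclideanSpace ℝ (Fin d)), (-1 : ℝ)) := by
    have hLc := congrArg L hcs
    rw [map_sum, hz, L.apply_symm_apply] at hLc
    rw [← hLc]
    refine Finset.sum_congr rfl fun i _ => ?_
    rw [hq, map_smul, L.apply_symm_apply]
  rw [← prod_mk_sum] at hcomp
  have hfst : ∑ i, c i • v i (s i) = 0 := by
    simpa using congrArg Prod.fst hcomp
  have hsnd : ∑ i, c i • ⟪v i (s i), p i (s i)⟫_ℝ = -1 := by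
    simpa using congrArg Prod.snd hcomp
  have hzero : (0:ℝ) = ⟪∑ i, c i • v i (s i), wit s⟫_ℝ := by
    rw [hfst, inner_zero_left]
  have hle : ⟪∑ i, c i • v i (s i), wit s⟫_ℝ
      ≤ ∑ i, c i • ⟪v i (s i), p i (s i)⟫_ℝ := by
    rw [sum_inner]
    refine Finset.sum_le_sum fun i _ => ?_
    rw [real_inner_smul_left, smul_eq_mul]
    exact mul_le_mul_of_nonneg_left (hhalf i (s i) (wit s) (hKsel s i)) (hc0 i)
  rw [← hzero, hsnd] at hle
  linarith
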